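/- arXiv:0707.1177 — 3 statements merged into one kernel-verified Lean document; each statement's English description precedes it below -/
import Mathlib

section
/- Let S ⊆ ℝ^n be Lebesgue measurable and suppose no two points of S at Euclidean distance exactly 1 differ by a unit vector with all rational coordinates (i.e., S is an independent set in the graph T_{ℚ^n}). If y is a point of Lebesgue density 1 of S and x ∈ ℝ^n satisfies ‖x - y‖ = 1, then the Lebesgue density of S at x is 0. -/
open MeasureTheory Metric Filter
open scoped ENNReal

/-- A point of `ℝ^n` has all rational coordinates. -/
def RatPt {n : ℕ} (x : EuclideanSpace ℝ (Fin n)) : Prop := ∀ i, ∃ q : ℚ, x i = (q : ℝ)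

/-- The graph `T_{ℚ^n}`: vertices are points of `ℝ^n`, with an edge between `u` and `v`
iff `u - v` is a rational unit vector. -/
def TQ (n : ℕ) : SimpleGraph (EuclideanSpace ℝ (Fin n)) :=
  SimpleGraph.fromRel (fun u v => RatPt (u - v) ∧ dist u v = 1)

/-- `S` has Lebesgue density `d` at `x`. -/
def HasDensity {n : ℕ} (S : Set (EuclideanSpace ℝ (Fin n))) (x : EuclideanSpace ℝ (Fin n))
    (d : ℝ≥0∞) : Prop :=
  Tendsto (fun ε : ℝ => volume (S ∩ ball x ε) / volume (ball x ε))
    (nhdsWithin 0 (Set.Ioi 0)) (nhds d)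


section AuxSphere
open Finset
set_option linter.unusedVariables false

variable {n : ℕ}

/-- sum of squares over coordinates other than i₀ -/
noncomputable def sSq (i₀ : Fin n) (w : Fin n → ℝ) : ℝ := ∑ i ∈ univ.erase i₀, w i ^ 2

noncomputable def Fst (i₀ : Fin n) (w : Fin n → ℝ) : EuclideanSpace ℝ (Fin n) :=
  WithLp.toLp 2 fun i => if i = i₀ then (sSq i₀ w - 1) / (sSq i₀ w + 1) else 2 * w i / (sSq i₀ w + 1)

lemma sSq_nonneg (i₀ : Fin n) (w : Fin n → ℝ) : 0 ≤ sSq i₀ w :=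
  Finset.sum_nonneg fun i _ => sq_nonneg _

lemma sSq_add_one_ne (i₀ : Fin n) (w : Fin n → ℝ) : sSq i₀ w + 1 ≠ 0 := by
  have := sSq_nonneg i₀ w; positivity

lemma norm_Fst (i₀ : Fin n) (w : Fin n → ℝ) : ‖Fst i₀ w‖ = 1 := by
  have h0 := sSq_nonneg i₀ w
  have h1 := sSq_add_one_ne i₀ w
  rw [EuclideanSpace.norm_eq]
  have : ∑ i, (Fst i₀ w i) ^ 2 = 1 := by
    rw [← Finset.add_sum_erase _ _ (Finset.mem_univ i₀)]
    have e1 : Fst i₀ w i₀ = (sSq i₀ w - 1) / (sSq i₀ w + 1) := by simp [Fst]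
    have e2 : ∑ i ∈ univ.erase i₀, (Fst i₀ w i) ^ 2
        = ∑ i ∈ univ.erase i₀, 4 * w i ^ 2 / (sSq i₀ w + 1) ^ 2 := by
      apply Finset.sum_congr rfl
      intro i hi
      have : i ≠ i₀ := (Finset.mem_erase.1 hi).1
      simp only [Fst, PiLp.toLp_apply, if_neg this]
      field_simp
      ring
    rw [e1, e2]
    have e3 : ∑ i ∈ univ.erase i₀, 4 * w i ^ 2 / (sSq i₀ w + 1) ^ 2
        = 4 * sSq i₀ w / (sSq i₀ w + 1) ^ 2 := by
      rw [← Finset.sum_div, ← Finset.mul_sum, sSq]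
    rw [e3]
    field_simp
    ring
  simp only [Real.norm_eq_abs, sq_abs]
  rw [this, Real.sqrt_one]

lemma continuous_Fst (i₀ : Fin n) : Continuous (Fst i₀) := by
  have hs : Continuous (sSq i₀) :=
    continuous_finset_sum _ fun i _ => (continuous_apply i).pow 2
  have : Continuous fun w => ((Fst i₀ w : Fin n → ℝ)) := by
    apply continuous_pi
    intro i
    by_cases h : i = i₀
    · simp only [Fst, PiLp.toLp_apply, h, if_true]
      exact ((hs.sub continuous_const).div (hs.add continuous_const)
        fun w => sSq_add_one_ne i₀ w)
    · simp only [Fst, PiLp.toLp_apply, if_neg h]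
      exact ((continuous_const.mul (continuous_apply i)).div (hs.add continuous_const)
        fun w => sSq_add_one_ne i₀ w)
  exact (PiLp.continuous_toLp 2 fun _ : Fin n => ℝ).comp this

lemma split_sum (i₀ : Fin n) (f : Fin n → ℝ) :
    f i₀ + ∑ i ∈ univ.erase i₀, f i = ∑ i, f i :=
  Finset.add_sum_erase _ f (Finset.mem_univ i₀)

lemma ratPt_Fst (i₀ : Fin n) (qf : Fin n → ℚ) : RatPt (Fst i₀ fun i => (qf i : ℝ)) := by
  set r : ℚ := ∑ i ∈ univ.erase i₀, qf i ^ 2 with hr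
  have hs : sSq i₀ (fun i => (qf i : ℝ)) = (r : ℝ) := by
    rw [hr]; push_cast [sSq]; rfl
  intro i
  by_cases h : i = i₀
  · exact ⟨(r - 1) / (r + 1), by simp [Fst, h, hs]⟩
  · exact ⟨2 * qf i / (r + 1), by simp [Fst, h, hs]⟩

lemma Fst_surj (i₀ : Fin n) (v : EuclideanSpace ℝ (Fin n)) (hv : ‖v‖ = 1)
    (hvi : v i₀ ≠ 1) : Fst i₀ (fun i => if i = i₀ then 0 else v i / (1 - v i₀)) = v := by
  have hsum : ∑ i, v i ^ 2 = 1 := by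
    have := hv
    rw [EuclideanSpace.norm_eq] at this
    have h2 : ∑ i, ‖v i‖ ^ 2 = 1 := by
      have hnn : 0 ≤ ∑ i, ‖v i‖ ^ 2 := Finset.sum_nonneg fun i _ => sq_nonneg _
      nlinarith [Real.sq_sqrt hnn, this]
    simpa [Real.norm_eq_abs, sq_abs] using h2
  have hvb : v i₀ ^ 2 ≤ 1 := by
    have : v i₀ ^ 2 + ∑ i ∈ univ.erase i₀, v i ^ 2 = 1 := by
      rw [split_sum i₀ (fun i => v i ^ 2)]; exact hsum
    nlinarith [Finset.sum_nonneg (fun i (_ : i ∈ univ.erase i₀) => sq_nonneg (v i))]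
  have h1 : 1 - v i₀ ≠ 0 := by
    intro h; exact hvi (by linarith [sub_eq_zero.1 h])
  set w : Fin n → ℝ := fun i => if i = i₀ then 0 else v i / (1 - v i₀) with hw
  have hsw : sSq i₀ w = (1 + v i₀) / (1 - v i₀) := by
    have e : ∑ i ∈ univ.erase i₀, v i ^ 2 = 1 - v i₀ ^ 2 := by
      have : v i₀ ^ 2 + ∑ i ∈ univ.erase i₀, v i ^ 2 = 1 := by
        rw [split_sum i₀ (fun i => v i ^ 2)]; exact hsum
      linarith
    rw [sSq]
    have : ∀ i ∈ univ.erase i₀, w i ^ 2 = v i ^ 2 / (1 - v i₀) ^ 2 := by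
      intro i hi
      simp only [hw, if_neg (Finset.mem_erase.1 hi).1, div_pow]
    rw [Finset.sum_congr rfl this, ← Finset.sum_div, e]
    field_simp
    ring
  have hden : sSq i₀ w + 1 = 2 / (1 - v i₀) := by
    rw [hsw]; field_simp; ring
  ext i
  by_cases h : i = i₀
  · subst h
    simp only [Fst, PiLp.toLp_apply, if_true, hsw, hden, reduceIte]
    field_simp
    ring
  · simp only [Fst, PiLp.toLp_apply, if_neg h, hden]
    simp only [hw, if_neg h]
    field_simp

lemma rat_dense_sphere (hn : 0 < n) (v : EuclideanSpace ℝ (Fin n)) (hv : ‖v‖ = 1)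
    {δ : ℝ} (hδ : 0 < δ) :
    ∃ q : EuclideanSpace ℝ (Fin n), RatPt q ∧ ‖q‖ = 1 ∧ ‖q - v‖ < δ := by
  set i₀ : Fin n := ⟨0, hn⟩
  by_cases hvi : v i₀ = 1
  · refine ⟨v, ?_, hv, by simp [hδ]⟩
    -- v = e_{i₀} is rational
    have hsum : ∑ i, v i ^ 2 = 1 := by
      rw [EuclideanSpace.norm_eq] at hv
      have hnn : 0 ≤ ∑ i, ‖v i‖ ^ 2 := Finset.sum_nonneg fun i _ => sq_nonneg _
      have h2 : ∑ i, ‖v i‖ ^ 2 = 1 := by nlinarith [Real.sq_sqrt hnn, hv]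
      simpa [Real.norm_eq_abs, sq_abs] using h2
    have hrest : ∑ i ∈ univ.erase i₀, v i ^ 2 = 0 := by
      have : v i₀ ^ 2 + ∑ i ∈ univ.erase i₀, v i ^ 2 = 1 := by
        rw [split_sum i₀ (fun i => v i ^ 2)]; exact hsum
      rw [hvi] at this; linarith
    intro i
    by_cases h : i = i₀
    · exact ⟨1, by rw [h, hvi]; norm_num⟩
    · refine ⟨0, ?_⟩
      have := (Finset.sum_eq_zero_iff_of_nonneg
        (fun i _ => sq_nonneg (v i))).1 hrest i (by simp [h])
      simpa using pow_eq_zero_iff (n := 2) (by norm_num) |>.1 this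
  · set w : Fin n → ℝ := fun i => if i = i₀ then 0 else v i / (1 - v i₀) with hw
    have hFw : Fst i₀ w = v := Fst_surj i₀ v hv hvi
    have hc : ContinuousAt (Fst i₀) w := (continuous_Fst i₀).continuousAt
    rw [Metric.continuousAt_iff] at hc
    obtain ⟨η, hη, hball⟩ := hc δ hδ
    -- choose rational approximation of w
    have : ∀ i, ∃ q : ℚ, |w i - (q : ℝ)| < η / 2 := fun i => exists_rat_near (w i) (by linarith)
    choose qf hqf using this
    set qf' : Fin n → ℚ := fun i => if i = i₀ then 0 else qf i with hqf'
    set w' : Fin n → ℝ := fun i => ((qf' i : ℝ)) with hw'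
    have hdist : dist w' w < η := by
      rw [dist_pi_lt_iff hη]
      intro i
      by_cases h : i = i₀
      · simp [hw', hqf', h, hw, Real.dist_eq, hη]
      · simp only [hw', hqf', if_neg h, Real.dist_eq]
        calc |(qf i : ℝ) - w i| = |w i - qf i| := abs_sub_comm _ _
        _ < η / 2 := hqf i
        _ < η := by linarith
    refine ⟨Fst i₀ w', ratPt_Fst i₀ qf', norm_Fst i₀ w', ?_⟩
    have := hball hdist
    rwa [hFw, dist_eq_norm] at this

end AuxSphere

/-- main -/
theorem density_zero_at_unit_distance {n : ℕ} (hn : 2 ≤ n)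
    (S : Set (EuclideanSpace ℝ (Fin n))) (hS : NullMeasurableSet S volume)
    (hind : ∀ u ∈ S, ∀ v ∈ S, ¬ (TQ n).Adj u v)
    (x y : EuclideanSpace ℝ (Fin n)) (hy : HasDensity S y 1) (hxy : ‖x - y‖ = 1) :
    HasDensity S x 0 := by
  have hn0 : 0 < n := lt_of_lt_of_le two_pos hn
  set c := volume (ball (0 : EuclideanSpace ℝ (Fin n)) 1) with hc
  -- key geometric inequality
  have key : ∀ ε : ℝ, 0 < ε → volume (S ∩ ball x ε) ≤ volume (ball y (2*ε) \ S) := by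
    intro ε hε
    obtain ⟨q, hqrat, hqnorm, hqclose⟩ := rat_dense_sphere hn0 (x - y) hxy hε
    have hsub : (fun z => z - q) '' (S ∩ ball x ε) ⊆ ball y (2*ε) \ S := by
      rintro _ ⟨z, ⟨hzS, hzball⟩, rfl⟩
      rw [mem_ball, dist_eq_norm] at hzball
      refine ⟨?_, ?_⟩
      · rw [mem_ball, dist_eq_norm]
        have e : z - q - y = (z - x) + ((x - y) - q) := by abel
        calc ‖z - q - y‖ = ‖(z - x) + ((x - y) - q)‖ := by rw [e]
          _ ≤ ‖z - x‖ + ‖(x - y) - q‖ := norm_add_le _ _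
          _ < ε + ε := by
              have h2 : ‖(x - y) - q‖ = ‖q - (x - y)‖ := norm_sub_rev _ _
              rw [h2]
              exact add_lt_add hzball hqclose
          _ = 2*ε := by ring
      · intro hmem
        apply hind z hzS (z - q) hmem
        have hzq : z - (z - q) = q := by abel
        have hq0 : q ≠ 0 := by
          intro h; rw [h] at hqnorm; simp at hqnorm
        rw [TQ, SimpleGraph.fromRel_adj]
        refine ⟨?_, Or.inl ⟨?_, ?_⟩⟩
        · intro h
          apply hq0
          have : z - q = z := h.symm
          rwa [sub_eq_self] at this
        · rw [hzq]; exact hqrat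
        · rw [dist_eq_norm, hzq, hqnorm]
    have himg : volume ((fun z => z - q) '' (S ∩ ball x ε)) = volume (S ∩ ball x ε) := by
      have e : (fun z : EuclideanSpace ℝ (Fin n) => z - q) '' (S ∩ ball x ε)
          = (fun z => q + z) ⁻¹' (S ∩ ball x ε) := by
        ext z
        constructor
        · rintro ⟨a, ha, rfl⟩
          simpa [Set.mem_preimage, add_sub_cancel] using ha
        · intro hz
          exact ⟨q + z, hz, by simp⟩
      rw [e, measure_preimage_add]
    calc volume (S ∩ ball x ε) = volume ((fun z => z - q) '' (S ∩ ball x ε)) := himg.symm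
      _ ≤ volume (ball y (2*ε) \ S) := measure_mono hsub
  -- ball volume formula
  have hvol : ∀ (p : EuclideanSpace ℝ (Fin n)) (r : ℝ), 0 < r →
      volume (ball p r) = ENNReal.ofReal (r ^ n) * c := by
    intro p r hr
    rw [hc, Measure.addHaar_ball_of_pos volume p hr, finrank_euclideanSpace_fin]
  have hcne : c ≠ 0 := by
    rw [hc]; exact (measure_ball_pos volume _ one_pos).ne'
  have hcfin : c ≠ ⊤ := by rw [hc]; exact measure_ball_lt_top.ne
  -- complement density 0 at y
  have hcompl : Tendsto (fun r : ℝ => volume (ball y r \ S) / volume (ball y r))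
      (nhdsWithin 0 (Set.Ioi 0)) (nhds 0) := by
    have hev : (fun r : ℝ => volume (ball y r \ S) / volume (ball y r))
        =ᶠ[nhdsWithin 0 (Set.Ioi 0)]
        (fun r => 1 - volume (S ∩ ball y r) / volume (ball y r)) := by
      filter_upwards [self_mem_nhdsWithin] with r hr
      have hr : (0:ℝ) < r := hr
      have hne : volume (ball y r) ≠ 0 := (measure_ball_pos volume y hr).ne'
      have hfin : volume (ball y r) ≠ ⊤ := measure_ball_lt_top.ne
      have hsplit : volume (ball y r ∩ S) + volume (ball y r \ S) = volume (ball y r) :=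
        measure_inter_add_diff₀ _ hS
      have hfin2 : volume (ball y r ∩ S) ≠ ⊤ :=
        (lt_of_le_of_lt (measure_mono Set.inter_subset_left) measure_ball_lt_top).ne
    -- diff = total - inter
      have hd : volume (ball y r \ S) = volume (ball y r) - volume (S ∩ ball y r) := by
        rw [Set.inter_comm S]
        rw [add_comm] at hsplit
        exact ENNReal.eq_sub_of_add_eq hfin2 hsplit
      rw [hd, ENNReal.sub_div (fun _ _ => hne), ENNReal.div_self hne hfin]
    refine Tendsto.congr' hev.symm ?_
    have := ENNReal.Tendsto.sub
      (tendsto_const_nhds : Tendsto (fun _ : ℝ => (1:ℝ≥0∞)) (nhdsWithin 0 (Set.Ioi 0)) (nhds 1))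
      hy (Or.inl ENNReal.one_ne_top)
    simpa using this
  -- scaled version
  have hmul2 : Tendsto (fun ε : ℝ => 2 * ε) (nhdsWithin 0 (Set.Ioi 0))
      (nhdsWithin 0 (Set.Ioi 0)) := by
    rw [tendsto_nhdsWithin_iff]
    constructor
    · have : Tendsto (fun ε : ℝ => 2 * ε) (nhds 0) (nhds (2 * 0)) :=
        (continuous_const.mul continuous_id).tendsto 0
      simpa using this.mono_left nhdsWithin_le_nhds
    · filter_upwards [self_mem_nhdsWithin] with r hr
      exact mul_pos two_pos (Set.mem_Ioi.1 hr)
  have hg : Tendsto (fun ε : ℝ => volume (ball y (2*ε) \ S) / volume (ball y (2*ε)))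
      (nhdsWithin 0 (Set.Ioi 0)) (nhds 0) := hcompl.comp hmul2
  -- final squeeze
  have h2n : ((2:ℝ≥0∞) ^ n) ≠ ⊤ := by simp
  have hlim : Tendsto (fun ε : ℝ =>
      (2:ℝ≥0∞) ^ n * (volume (ball y (2*ε) \ S) / volume (ball y (2*ε))))
      (nhdsWithin 0 (Set.Ioi 0)) (nhds 0) := by
    have := ENNReal.Tendsto.const_mul (a := (2:ℝ≥0∞) ^ n) hg (Or.inr h2n)
    simpa using this
  have hub : ∀ᶠ ε in nhdsWithin (0:ℝ) (Set.Ioi 0),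
      volume (S ∩ ball x ε) / volume (ball x ε)
      ≤ (2:ℝ≥0∞) ^ n * (volume (ball y (2*ε) \ S) / volume (ball y (2*ε))) := by
    filter_upwards [self_mem_nhdsWithin] with ε hε
    have hε : (0:ℝ) < ε := hε
    have hBx := hvol x ε hε
    have hBy := hvol y (2*ε) (by linarith)
    have hkey := key ε hε
    have hDne : ENNReal.ofReal (ε ^ n) * c ≠ 0 := by
      apply mul_ne_zero _ hcne
      simp [ENNReal.ofReal_eq_zero, not_le]
      positivity
    have hBy' : volume (ball y (2*ε)) = (2:ℝ≥0∞) ^ n * (ENNReal.ofReal (ε ^ n) * c) := by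
      rw [hBy]
      have : (2*ε) ^ n = 2 ^ n * ε ^ n := by rw [mul_pow]
      rw [this, ENNReal.ofReal_mul (by positivity), mul_assoc]
      congr 1
      rw [ENNReal.ofReal_pow (by norm_num : (0:ℝ) ≤ 2)]
      norm_num
    rw [hBx, hBy']
    have hrw : (2:ℝ≥0∞) ^ n * (volume (ball y (2*ε) \ S)
        / ((2:ℝ≥0∞) ^ n * (ENNReal.ofReal (ε ^ n) * c)))
        = volume (ball y (2*ε) \ S) / (ENNReal.ofReal (ε ^ n) * c) := by
      rw [← mul_div_assoc, ENNReal.mul_div_mul_left _ _ (pow_ne_zero _ two_ne_zero) h2n]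
    rw [hrw]
    exact ENNReal.div_le_div_right hkey _
  exact tendsto_of_tendsto_of_tendsto_of_le_of_le' tendsto_const_nhds hlim
    (Eventually.of_forall fun ε => zero_le) hub
end

section
/- If S ⊆ ℝ^n is an independent set in T_{ℚ^n} (no two points of S differ by a rational unit vector), S is measurable, and x, y ∈ ℝ^n with ‖x - y‖ = 1, then for all sufficiently small ε > 0 and all x' with x' - y ∈ ℚ^n, ‖x' - y‖ = 1, we have μ(B_ε(y) ∩ S) + μ(B_ε(x') ∩ S) ≤ μ(B_ε(y)), where μ is Lebesgue measure. -/
open MeasureTheory Metric Filter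

private lemma vol_image_add {n : ℕ} (v : EuclideanSpace ℝ (Fin n))
    (s : Set (EuclideanSpace ℝ (Fin n))) :
    volume ((· + v) '' s) = volume s := by
  have h : (· + v) '' s = (· + (-v)) ⁻¹' s := by
    have := Set.image_add_right' (t := s) (b := -v)
    simpa using this
  rw [h, measure_preimage_add_right]

/-- For a measurable independent set `S` of `T_{ℚ^n}` and `x, y` at unit distance,
for all sufficiently small `ε > 0` and every neighbour `x'` of `y` in `T_{ℚ^n}`,
`μ(B_ε(y) ∩ S) + μ(B_ε(x') ∩ S) ≤ μ(B_ε(y))`. -/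
theorem ball_measure_sum_le {n : ℕ} (hn : 2 ≤ n)
    (S : Set (EuclideanSpace ℝ (Fin n))) (hS : NullMeasurableSet S volume)
    (hind : ∀ u ∈ S, ∀ v ∈ S, ¬ (TQ n).Adj u v)
    (x y : EuclideanSpace ℝ (Fin n)) (hxy : ‖x - y‖ = 1) :
    ∃ ε₀ > (0 : ℝ), ∀ ε, 0 < ε → ε < ε₀ →
      ∀ x' : EuclideanSpace ℝ (Fin n), RatPt (x' - y) → ‖x' - y‖ = 1 →
        volume (ball y ε ∩ S) + volume (ball x' ε ∩ S) ≤ volume (ball y ε) := by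
  refine ⟨1, one_pos, fun ε hε _ x' hrat hnorm => ?_⟩
  set v := x' - y with hv
  have hv0 : v ≠ 0 := by
    intro h
    rw [h, norm_zero] at hnorm
    exact one_ne_zero hnorm.symm
  -- the translated set
  set A : Set (EuclideanSpace ℝ (Fin n)) := (· + v) '' (ball y ε ∩ S) with hA
  have hAvol : volume A = volume (ball y ε ∩ S) := by
    rw [hA]
    exact vol_image_add v _
  -- A ⊆ ball x' ε
  have hAsub : A ⊆ ball x' ε := by
    rintro a ⟨s, ⟨hs1, _⟩, rfl⟩
    rw [mem_ball] at hs1 ⊢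
    have : dist (s + v) x' = dist s y := by
      rw [dist_eq_norm, dist_eq_norm]
      congr 1
      rw [hv]
      abel
    rwa [this]
  -- A disjoint from S
  have hdisj : Disjoint A S := by
    rw [Set.disjoint_left]
    rintro a ⟨s, ⟨_, hsS⟩, rfl⟩ haS
    refine hind s hsS (s + v) haS ?_
    refine ⟨?_, Or.inr ⟨?_, ?_⟩⟩
    · intro h
      exact hv0 (by simpa using congrArg (· - s) h.symm)
    · have : s + v - s = v := by abel
      rwa [this]
    · rw [dist_eq_norm]
      have : s + v - s = v := by abel
      rw [this]
      exact hnorm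
  -- combine
  calc volume (ball y ε ∩ S) + volume (ball x' ε ∩ S)
      = volume A + volume (ball x' ε ∩ S) := by rw [hAvol]
    _ = volume (A ∪ (ball x' ε ∩ S)) := by
        rw [measure_union₀ ((measurableSet_ball.nullMeasurableSet).inter hS)
          (hdisj.mono_right Set.inter_subset_right).aedisjoint]
    _ ≤ volume (ball x' ε) := measure_mono (Set.union_subset hAsub Set.inter_subset_left)
    _ = volume (ball y ε) := by
        have := vol_image_add v (ball y ε)
        rw [← this]
        congr 1
        ext a
        simp only [Set.mem_image, mem_ball]
        constructor
        · intro ha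
          refine ⟨a - v, ?_, by abel⟩
          have : dist (a - v) y = dist a x' := by
            rw [dist_eq_norm, dist_eq_norm]; congr 1; rw [hv]; abel
          rwa [this]
        · rintro ⟨s, hs, rfl⟩
          have : dist (s + v) x' = dist s y := by
            rw [dist_eq_norm, dist_eq_norm]; congr 1; rw [hv]; abel
          rwa [this]
end

section
/- In the unit distance graph on ℚ^3, there is a proper 2-coloring; hence χ(ℚ^3) = 2. -/
/-- The unit distance graph on `ℚ³`. -/
def QQ3 : SimpleGraph (Fin 3 → ℚ) :=
  SimpleGraph.fromRel (fun u v => ∑ i, (u i - v i) ^ 2 = 1)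

open Finset

lemma zmod2_sq : ∀ x : ZMod 2, x ^ 2 = x := by decide

lemma odd_nat_cast2 {n : ℕ} (h : Odd n) : (n : ZMod 2) = 1 := by
  obtain ⟨k, rfl⟩ := h
  push_cast
  have h2 : ((2 : ℕ) : ZMod 2) = 0 := by decide
  push_cast at h2
  rw [h2]; ring

lemma odd_of_dvd_odd {m n : ℕ} (h : n ∣ m) (hm : Odd m) : Odd n := by
  rw [Nat.not_even_iff_odd.symm] at hm ⊢
  intro he
  exact hm (even_iff_two_dvd.2 ((even_iff_two_dvd.1 he).trans h))

lemma rat_cross (x : ℚ) : (x.num : ℚ) = x * x.den := by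
  rw [Rat.mul_den_eq_num]

lemma rat_add_num_parity (x y : ℚ) (hx : Odd x.den) (hy : Odd y.den) :
    (((x + y).num : ZMod 2)) = (x.num : ZMod 2) + (y.num : ZMod 2) := by
  have hxy : Odd (x + y).den := odd_of_dvd_odd (Rat.add_den_dvd x y) (hx.mul hy)
  have key : ((x + y).num : ℚ) * (x.den * y.den) =
      (x.num * y.den + y.num * x.den) * ((x + y).den : ℚ) := by
    rw [rat_cross (x + y), rat_cross x, rat_cross y]; push_cast; ring
  have keyZ : (x + y).num * (x.den * y.den : ℤ) =
      (x.num * y.den + y.num * x.den) * ((x + y).den : ℤ) := by exact_mod_cast key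
  have h2 := congrArg (fun z : ℤ => (z : ZMod 2)) keyZ
  push_cast at h2
  rw [odd_nat_cast2 hx, odd_nat_cast2 hy, odd_nat_cast2 hxy] at h2
  simpa using h2

lemma rat_neg_num_parity (x : ℚ) : (((-x).num : ZMod 2)) = (x.num : ZMod 2) := by
  rw [Rat.neg_num]; push_cast; exact CharTwo.neg_eq _

/-- The subgroup of vectors with all denominators odd. -/
def Kgrp : AddSubgroup (Fin 3 → ℚ) where
  carrier := {v | ∀ i, Odd (v i).den}
  zero_mem' := by intro i; simp [Rat.den_ofNat]
  add_mem' := by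
    intro a b ha hb i
    exact odd_of_dvd_odd (Rat.add_den_dvd _ _) ((ha i).mul (hb i))
  neg_mem' := by intro a ha i; simpa [Rat.neg_den] using ha i

/-- The subgroup of vectors with all denominators odd and even numerator sum. -/
def Hgrp : AddSubgroup (Fin 3 → ℚ) where
  carrier := {v | (∀ i, Odd (v i).den) ∧ ∑ i, (((v i).num : ZMod 2)) = 0}
  zero_mem' := by
    refine ⟨fun i => by simp [Rat.den_ofNat], by simp⟩
  add_mem' := by
    intro a b ha hb
    refine ⟨fun i => odd_of_dvd_odd (Rat.add_den_dvd _ _) ((ha.1 i).mul (hb.1 i)), ?_⟩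
    have : ∀ i, (((a + b) i).num : ZMod 2) = ((a i).num : ZMod 2) + ((b i).num : ZMod 2) :=
      fun i => rat_add_num_parity (a i) (b i) (ha.1 i) (hb.1 i)
    rw [Finset.sum_congr rfl (fun i _ => this i), Finset.sum_add_distrib, ha.2, hb.2, add_zero]
  neg_mem' := by
    intro a ha
    refine ⟨fun i => by simpa [Rat.neg_den] using ha.1 i, ?_⟩
    have : ∀ i, (((-a) i).num : ZMod 2) = ((a i).num : ZMod 2) :=
      fun i => rat_neg_num_parity (a i)
    rw [Finset.sum_congr rfl (fun i _ => this i), ha.2]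

lemma Hgrp_le_Kgrp : Hgrp ≤ Kgrp := fun _ hv => hv.1

lemma numsum_sub {x y : Fin 3 → ℚ} (hx : x ∈ Kgrp) (hy : y ∈ Kgrp) :
    ∑ i, (((x - y) i).num : ZMod 2) = ∑ i, ((x i).num : ZMod 2) - ∑ i, ((y i).num : ZMod 2) := by
  have hny : ∀ i, Odd (-(y i)).den := fun i => by simpa [Rat.neg_den] using hy i
  have : ∀ i, (((x - y) i).num : ZMod 2) = ((x i).num : ZMod 2) - ((y i).num : ZMod 2) := by
    intro i
    have h1 : (x - y) i = x i + -(y i) := by simp [sub_eq_add_neg]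
    rw [h1, rat_add_num_parity _ _ (hx i) (hny i), rat_neg_num_parity,
      sub_eq_add_neg, CharTwo.neg_eq]
  rw [Finset.sum_congr rfl (fun i _ => this i), Finset.sum_sub_distrib]

/-- `Hgrp` has index 2 in `Kgrp`. -/
lemma index_two {x y : Fin 3 → ℚ} (hx : x ∈ Kgrp) (hy : y ∈ Kgrp)
    (hx' : x ∉ Hgrp) (hy' : y ∉ Hgrp) : x - y ∈ Hgrp := by
  have hxs : ∑ i, ((x i).num : ZMod 2) = 1 := by
    have := fun h => hx' ⟨hx, h⟩
    revert this
    generalize (∑ i, ((x i).num : ZMod 2)) = z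
    revert z; decide
  have hys : ∑ i, ((y i).num : ZMod 2) = 1 := by
    have := fun h => hy' ⟨hy, h⟩
    revert this
    generalize (∑ i, ((y i).num : ZMod 2)) = z
    revert z; decide
  refine ⟨fun i => Kgrp.sub_mem hx hy i, ?_⟩
  rw [numsum_sub hx hy, hxs, hys, sub_self]

lemma int_sq_zmod4_even {A : ℤ} (h : Even A) : ((A : ZMod 4)) ^ 2 = 0 := by
  obtain ⟨k, rfl⟩ := h
  push_cast
  have h4 : ((4 : ℤ) : ZMod 4) = 0 := by decide
  push_cast at h4
  linear_combination (k : ZMod 4) * k * h4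

lemma int_sq_zmod4_odd {A : ℤ} (h : Odd A) : ((A : ZMod 4)) ^ 2 = 1 := by
  obtain ⟨k, rfl⟩ := h
  push_cast
  have h4 : ((4 : ℤ) : ZMod 4) = 0 := by decide
  push_cast at h4
  linear_combination ((k : ZMod 4) * k + k) * h4

lemma parity_step {A B C D : ℤ} (h : A ^ 2 + B ^ 2 + C ^ 2 = D ^ 2) :
    Even D ↔ (Even A ∧ Even B ∧ Even C) := by
  have h4 : ((A : ZMod 4)) ^ 2 + ((B : ZMod 4)) ^ 2 + ((C : ZMod 4)) ^ 2 = ((D : ZMod 4)) ^ 2 := by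
    have := congrArg (fun z : ℤ => (z : ZMod 4)) h
    push_cast at this
    linear_combination this
  rcases Int.even_or_odd A with hA | hA <;> rcases Int.even_or_odd B with hB | hB <;>
    rcases Int.even_or_odd C with hC | hC <;> rcases Int.even_or_odd D with hD | hD <;>
    [skip; skip; skip; skip; skip; skip; skip; skip; skip; skip; skip; skip; skip; skip; skip; skip] <;>
    first
      | (simp only [int_sq_zmod4_even, int_sq_zmod4_odd, hA, hB, hC, hD] at h4
         exact absurd h4 (by decide))
      | (constructor
         · intro _; exact ⟨hA, hB, hC⟩
         · intro _
           first
             | exact hD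
             | (exact absurd hD (by simp [Int.not_even_iff_odd] at *; assumption)))
      | (constructor
         · intro h'; exact absurd h' (by simpa [Int.not_even_iff_odd] using hD)
         · rintro ⟨h1, h2, h3⟩
           first
             | exact absurd h1 (by simpa [Int.not_even_iff_odd] using hA)
             | exact absurd h2 (by simpa [Int.not_even_iff_odd] using hB)
             | exact absurd h3 (by simpa [Int.not_even_iff_odd] using hC))

lemma pow_dvd_of_pow_dvd_D : ∀ (k : ℕ) (A B C D : ℤ),
    A ^ 2 + B ^ 2 + C ^ 2 = D ^ 2 → (2 : ℤ) ^ k ∣ D →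
    (2 : ℤ) ^ k ∣ A ∧ (2 : ℤ) ^ k ∣ B ∧ (2 : ℤ) ^ k ∣ C := by
  intro k
  induction k with
  | zero => intro A B C D _ _; simp
  | succ k ih =>
    intro A B C D heq hdvd
    have hDeven : Even D := by
      rw [even_iff_two_dvd]
      exact dvd_trans (dvd_pow_self 2 (Nat.succ_ne_zero k)) hdvd
    obtain ⟨hAe, hBe, hCe⟩ := (parity_step heq).1 hDeven
    obtain ⟨A', rfl⟩ := hAe
    obtain ⟨B', rfl⟩ := hBe
    obtain ⟨C', rfl⟩ := hCe
    obtain ⟨D', rfl⟩ := hDeven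
    have heq' : A' ^ 2 + B' ^ 2 + C' ^ 2 = D' ^ 2 := by nlinarith [heq]
    have hdvd' : (2 : ℤ) ^ k ∣ D' := by
      have h2 : (2 : ℤ) ^ (k + 1) = 2 ^ k * 2 := by ring
      rw [h2] at hdvd
      have : (D' + D') = 2 * D' := by ring
      rw [this] at hdvd
      rcases hdvd with ⟨c, hc⟩
      exact ⟨c, by linarith⟩
    obtain ⟨h1, h2, h3⟩ := ih A' B' C' D' heq' hdvd'
    refine ⟨?_, ?_, ?_⟩
    · obtain ⟨c, hc⟩ := h1; exact ⟨c, by rw [pow_succ]; linarith⟩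
    · obtain ⟨c, hc⟩ := h2; exact ⟨c, by rw [pow_succ]; linarith⟩
    · obtain ⟨c, hc⟩ := h3; exact ⟨c, by rw [pow_succ]; linarith⟩

/-- Asymmetric contradiction lemma: if the "first" denominator has maximal
2-adic valuation which is at least 1, we get a contradiction. -/
lemma no_even (a b c : ℤ) (p q r : ℕ) (α β γ : ℕ) (p' q' r' : ℕ)
    (hp' : Odd p') (hq' : Odd q') (hr' : Odd r')
    (hp : p = 2 ^ α * p') (hq : q = 2 ^ β * q') (hr : r = 2 ^ γ * r')
    (hα : 1 ≤ α)
    (ha : Odd a)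
    (heq : (a * (q * r : ℕ)) ^ 2 + (b * (p * r : ℕ)) ^ 2 + (c * (p * q : ℕ)) ^ 2
      = ((p * q * r : ℕ) : ℤ) ^ 2) : False := by
  have hdvdD : (2 : ℤ) ^ (α + β + γ) ∣ ((p * q * r : ℕ) : ℤ) := by
    subst hp hq hr
    push_cast
    exact ⟨(p' : ℤ) * q' * r', by push_cast; ring⟩
  obtain ⟨hA, -, -⟩ := pow_dvd_of_pow_dvd_D (α + β + γ) _ _ _ _ heq hdvdD
  -- A = a * q * r = a * 2^(β+γ) * (q' r')
  have hA' : (2 : ℤ) ^ (α + β + γ) ∣ (2 : ℤ) ^ (β + γ) * (a * (q' * r' : ℕ)) := by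
    subst hq hr
    obtain ⟨e, he⟩ := hA
    exact ⟨e, by push_cast at he ⊢; linear_combination he⟩
  have hA'' : (2 : ℤ) ^ α ∣ a * (q' * r' : ℕ) := by
    have h2 : (2 : ℤ) ^ (α + β + γ) = (2 : ℤ) ^ (β + γ) * 2 ^ α := by ring
    rw [h2] at hA'
    exact (mul_dvd_mul_iff_left (by positivity : (2 : ℤ) ^ (β + γ) ≠ 0)).1 hA'
  have h2dvd : (2 : ℤ) ∣ a * (q' * r' : ℕ) :=
    dvd_trans (dvd_pow_self 2 (by omega : α ≠ 0)) hA''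
  have hodd : Odd (a * ((q' * r' : ℕ) : ℤ)) := by
    refine ha.mul ?_
    exact_mod_cast (hq'.mul hr')
  rw [← Int.not_even_iff_odd] at hodd
  exact hodd (even_iff_two_dvd.2 h2dvd)

lemma num_odd_of_den_even (x : ℚ) (hx : Even x.den) : Odd x.num := by
  rw [← Int.not_even_iff_odd]
  intro hnum
  have h1 : 2 ∣ x.num.natAbs := even_iff_two_dvd.1 (Int.natAbs_even.2 hnum)
  have h2 : 2 ∣ x.den := even_iff_two_dvd.1 hx
  have := Nat.dvd_gcd h1 h2
  rw [x.reduced] at this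
  omega

lemma rat_unit_vec (d : Fin 3 → ℚ) (h : ∑ i, (d i) ^ 2 = 1) :
    (∀ i, Odd (d i).den) ∧ ∑ i, (((d i).num : ZMod 2)) = 1 := by
  rw [Fin.sum_univ_three] at h
  set a := (d 0).num with ha_def
  set b := (d 1).num with hb_def
  set c := (d 2).num with hc_def
  set p := (d 0).den with hp_def
  set q := (d 1).den with hq_def
  set r := (d 2).den with hr_def
  have e0 : (a : ℚ) = d 0 * p := (rat_cross (d 0))
  have e1 : (b : ℚ) = d 1 * q := (rat_cross (d 1))
  have e2 : (c : ℚ) = d 2 * r := (rat_cross (d 2))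
  have heqQ : ((a * (q * r : ℕ)) : ℚ) ^ 2 + ((b * (p * r : ℕ)) : ℚ) ^ 2
      + ((c * (p * q : ℕ)) : ℚ) ^ 2 = ((p * q * r : ℕ) : ℚ) ^ 2 := by
    push_cast
    rw [e0, e1, e2]
    linear_combination ((p : ℚ) * q * r) ^ 2 * h
  have heq : (a * (q * r : ℕ)) ^ 2 + (b * (p * r : ℕ)) ^ 2 + (c * (p * q : ℕ)) ^ 2
      = ((p * q * r : ℕ) : ℤ) ^ 2 := by exact_mod_cast heqQ
  obtain ⟨α, p', hp', hpdec⟩ := Nat.exists_eq_two_pow_mul_odd (d 0).den_nz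
  obtain ⟨β, q', hq', hqdec⟩ := Nat.exists_eq_two_pow_mul_odd (d 1).den_nz
  obtain ⟨γ, r', hr', hrdec⟩ := Nat.exists_eq_two_pow_mul_odd (d 2).den_nz
  have hexp : ∀ (e : ℕ) (k m : ℕ), Odd m → e = 2 ^ k * m → Even e → 1 ≤ k := by
    intro e k m hm hdec he
    rcases Nat.eq_zero_or_pos k with h0 | h0
    · exfalso
      rw [← Nat.not_even_iff_odd] at hm
      apply hm
      rw [hdec, h0] at he
      simpa using he
    · exact h0
  have hdens : ∀ i, Odd (d i).den := by
    intro i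
    by_contra hoddc
    rw [Nat.not_odd_iff_even] at hoddc
    fin_cases i
    · exact no_even a b c p q r α β γ p' q' r' hp' hq' hr' hpdec hqdec hrdec
        (hexp p α p' hp' hpdec hoddc) (num_odd_of_den_even (d 0) hoddc) heq
    · refine no_even b a c q p r β α γ q' p' r' hq' hp' hr' hqdec hpdec hrdec
        (hexp q β q' hq' hqdec hoddc) (num_odd_of_den_even (d 1) hoddc) ?_
      push_cast at heq ⊢
      linear_combination heq
    · refine no_even c a b r p q γ α β r' p' q' hr' hp' hq' hrdec hpdec hqdec
        (hexp r γ r' hr' hrdec hoddc) (num_odd_of_den_even (d 2) hoddc) ?_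
      push_cast at heq ⊢
      linear_combination heq
  refine ⟨hdens, ?_⟩
  have h2 := congrArg (fun z : ℤ => (z : ZMod 2)) heq
  push_cast at h2
  simp only [zmod2_sq] at h2
  rw [odd_nat_cast2 (hdens 0), odd_nat_cast2 (hdens 1), odd_nat_cast2 (hdens 2)] at h2
  rw [Fin.sum_univ_three]
  rw [← ha_def, ← hb_def, ← hc_def]
  linear_combination h2

lemma adj_mem {u v : Fin 3 → ℚ} (h : QQ3.Adj u v) :
    (u - v) ∈ Kgrp ∧ (u - v) ∉ Hgrp := by
  rw [QQ3, SimpleGraph.fromRel_adj] at h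
  have hsum : ∑ i, ((u - v) i) ^ 2 = 1 := by
    rcases h.2 with h' | h'
    · simpa using h'
    · rw [← h']
      apply Finset.sum_congr rfl
      intro i _
      simp only [Pi.sub_apply]
      ring
  obtain ⟨hd, hn⟩ := rat_unit_vec (u - v) hsum
  refine ⟨hd, ?_⟩
  rintro ⟨-, h0⟩
  rw [hn] at h0
  exact one_ne_zero h0

open scoped Classical in
/-- The Benda–Perles 2-coloring. -/
noncomputable def bpColor (v : Fin 3 → ℚ) : Bool :=
  decide ((QuotientAddGroup.mk v : (Fin 3 → ℚ) ⧸ Hgrp) =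
    QuotientAddGroup.mk (Quotient.out (QuotientAddGroup.mk v : (Fin 3 → ℚ) ⧸ Kgrp)))

open scoped Classical in
lemma bpColor_valid {u v : Fin 3 → ℚ} (h : QQ3.Adj u v) : bpColor u ≠ bpColor v := by
  obtain ⟨hK, hH⟩ := adj_mem h
  have hρ : (QuotientAddGroup.mk u : (Fin 3 → ℚ) ⧸ Kgrp) = QuotientAddGroup.mk v :=
    (QuotientAddGroup.eq_iff_sub_mem).2 hK
  set r : Fin 3 → ℚ := Quotient.out (QuotientAddGroup.mk u : (Fin 3 → ℚ) ⧸ Kgrp) with hr_def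
  have hur : u - r ∈ Kgrp := by
    rw [← QuotientAddGroup.eq_iff_sub_mem, hr_def, QuotientAddGroup.out_eq' _]
  have hvr : v - r ∈ Kgrp := by
    rw [← QuotientAddGroup.eq_iff_sub_mem, hr_def, ← hρ, QuotientAddGroup.out_eq' _]
  have hπ : (QuotientAddGroup.mk u : (Fin 3 → ℚ) ⧸ Hgrp) ≠ QuotientAddGroup.mk v := by
    intro hcon
    exact hH ((QuotientAddGroup.eq_iff_sub_mem).1 hcon)
  intro hcc
  unfold bpColor at hcc
  have hout : (Quotient.out (QuotientAddGroup.mk v : (Fin 3 → ℚ) ⧸ Kgrp)) = r := by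
    rw [hr_def, hρ]
  rw [hout] at hcc
  rw [decide_eq_decide] at hcc
  by_cases h1 : (QuotientAddGroup.mk u : (Fin 3 → ℚ) ⧸ Hgrp) = QuotientAddGroup.mk r
  · exact hπ (h1.trans (hcc.1 h1).symm)
  · have h2 : ¬ ((QuotientAddGroup.mk v : (Fin 3 → ℚ) ⧸ Hgrp) = QuotientAddGroup.mk r) :=
      fun hc => h1 (hcc.2 hc)
    have hu' : u - r ∉ Hgrp := fun hc => h1 ((QuotientAddGroup.eq_iff_sub_mem).2 hc)
    have hv' : v - r ∉ Hgrp := fun hc => h2 ((QuotientAddGroup.eq_iff_sub_mem).2 hc)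
    have := index_two hur hvr hu' hv'
    rw [sub_sub_sub_cancel_right] at this
    exact hH this

noncomputable def bpColoring : QQ3.Coloring Bool :=
  SimpleGraph.Coloring.mk bpColor (fun h => bpColor_valid h)

lemma QQ3_colorable : QQ3.Colorable 2 := by
  have := bpColoring.colorable
  simpa using this

lemma QQ3_edge : QQ3.Adj (fun i => if i = 0 then (1 : ℚ) else 0) 0 := by
  rw [QQ3, SimpleGraph.fromRel_adj]
  constructor
  · intro hcon
    have := congrFun hcon 0
    norm_num at this
  · left
    rw [Fin.sum_univ_three]
    norm_num [Fin.ext_iff]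

/-- Benda–Perles: `ℚ³` has a proper 2-coloring, hence `χ(ℚ³) = 2`. -/
theorem chromatic_number_Q3 : QQ3.Colorable 2 ∧ QQ3.chromaticNumber = 2 := by
  refine ⟨QQ3_colorable, ?_⟩
  have hnot1 : ¬ QQ3.Colorable 1 := by
    rintro ⟨C⟩
    have := C.valid QQ3_edge
    exact this (Subsingleton.elim _ _)
  have hle : QQ3.chromaticNumber ≤ 2 := by
    have := QQ3_colorable.chromaticNumber_le
    exact_mod_cast this
  have hlt : (1 : ℕ∞) < QQ3.chromaticNumber := by
    by_contra hcon
    push_neg at hcon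
    rw [show ((1 : ℕ∞)) = ((1 : ℕ) : ℕ∞) by norm_num] at hcon
    rw [SimpleGraph.chromaticNumber_le_iff_colorable] at hcon
    exact hnot1 hcon
  have h2le : (2 : ℕ∞) ≤ QQ3.chromaticNumber := by
    have := Order.add_one_le_of_lt hlt
    simpa [one_add_one_eq_two] using this
  exact le_antisymm hle h2le
end
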